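/- Let X be a graph and A, B subsets of V(X), and let X(A,B) be the graph obtained from X by adding four new vertices a₁, a₂, b₁, b₂, the edges {a₁,b₁} and {a₂,b₂}, edges from both a₁ and a₂ to every vertex of A, and edges from both b₁ and b₂ to every vertex of B. Then X(A,B) is unstable; moreover, if X is connected, non-bipartite and twin-free, and at least one of A, B is non-empty, then X(A,B) is non-trivially unstable. -/

import Mathlib

open SimpleGraph

/-- The canonical double cover `BX = X × K₂` of a graph `X`:
vertex set `V × Bool`, with `(x,i)` adjacent to `(y,j)` iff `x ~ y` in `X` and `i ≠ j`. -/
def doubleCover {V : Type*} (X : SimpleGraph V) : SimpleGraph (V × Bool) where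
  Adj p q := X.Adj p.1 q.1 ∧ p.2 ≠ q.2
  symm := ⟨fun p q h => ⟨X.symm.symm _ _ h.1, Ne.symm h.2⟩⟩
  loopless := ⟨fun p h => h.2 rfl⟩

/-- An automorphism of `BX` is *expected* if it lies in the subgroup generated by the
lifts of automorphisms of `X` and the coordinate swap `τ`, i.e. it has the form
`(x,i) ↦ (φ x, i + b)` for some automorphism `φ` of `X` and some `b`. -/
def IsExpected {V : Type*} (X : SimpleGraph V) (α : doubleCover X ≃g doubleCover X) : Prop :=
  ∃ (φ : X ≃g X) (b : Bool), ∀ p : V × Bool, α p = (φ p.1, xor p.2 b)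

/-- A graph is *stable* if every automorphism of its canonical double cover is expected. -/
def IsStable {V : Type*} (X : SimpleGraph V) : Prop :=
  ∀ α : doubleCover X ≃g doubleCover X, IsExpected X α

/-- A graph is *twin-free* if distinct vertices have distinct neighbourhoods. -/
def TwinFree {V : Type*} (X : SimpleGraph V) : Prop :=
  ∀ u v : V, X.neighborSet u = X.neighborSet v → u = v

/-- The graph `X(A,B)`: add four new vertices `a₁ = inr 0`, `a₂ = inr 1`,
`b₁ = inr 2`, `b₂ = inr 3` to `X`, with the edges `{a₁,b₁}`, `{a₂,b₂}`,
edges from `a₁` and `a₂` to every vertex of `A`, and edges from `b₁` and `b₂`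
to every vertex of `B`. -/
def extGraph {V : Type*} (X : SimpleGraph V) (A B : Set V) : SimpleGraph (V ⊕ Fin 4) where
  Adj p q :=
    match p, q with
    | Sum.inl u, Sum.inl v => X.Adj u v
    | Sum.inl u, Sum.inr i => ((i = 0 ∨ i = 1) ∧ u ∈ A) ∨ ((i = 2 ∨ i = 3) ∧ u ∈ B)
    | Sum.inr i, Sum.inl u => ((i = 0 ∨ i = 1) ∧ u ∈ A) ∨ ((i = 2 ∨ i = 3) ∧ u ∈ B)
    | Sum.inr i, Sum.inr j =>
        (i = 0 ∧ j = 2) ∨ (i = 2 ∧ j = 0) ∨ (i = 1 ∧ j = 3) ∨ (i = 3 ∧ j = 1)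
  symm := by
    constructor
    rintro (u | i) (v | j) h
    · exact X.symm.symm _ _ h
    · exact h
    · exact h
    · tauto
  loopless := by
    constructor
    rintro (u | i) h
    · exact X.loopless.irrefl u h
    · rcases h with ⟨rfl, h2⟩ | ⟨rfl, h2⟩ | ⟨rfl, h2⟩ | ⟨rfl, h2⟩ <;> exact absurd h2 (by decide)


def swapFun {V : Type*} : (V ⊕ Fin 4) × Bool → (V ⊕ Fin 4) × Bool
  | (Sum.inl u, b) => (Sum.inl u, b)
  | (Sum.inr i, b) => (Sum.inr (if b then Equiv.swap 2 3 i else Equiv.swap 0 1 i), b)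

lemma swapFun_invol {V : Type*} : Function.Involutive (swapFun (V := V)) := by
  rintro ⟨(u | i), b⟩
  · rfl
  · cases b <;> simp [swapFun]

def swapIso {V : Type*} (X : SimpleGraph V) (A B : Set V) :
    doubleCover (extGraph X A B) ≃g doubleCover (extGraph X A B) where
  toEquiv := swapFun_invol.toPerm
  map_rel_iff' := by
    rintro ⟨(u | i), bp⟩ ⟨(v | j), bq⟩
    · rfl
    · show (doubleCover _).Adj _ (swapFun _) ↔ _
      fin_cases j <;> cases bq <;>
        simp [swapFun, doubleCover, extGraph, Equiv.swap_apply_def]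
    · show (doubleCover _).Adj (swapFun _) _ ↔ _
      fin_cases i <;> cases bp <;>
        simp [swapFun, doubleCover, extGraph, Equiv.swap_apply_def]
    · show (doubleCover _).Adj (swapFun _) (swapFun _) ↔ _
      fin_cases i <;> fin_cases j <;> cases bp <;> cases bq <;>
        simp [swapFun, doubleCover, extGraph, Equiv.swap_apply_def] <;> decide

lemma ext_not_stable {V : Type*} (X : SimpleGraph V) (A B : Set V) :
    ¬ IsStable (extGraph X A B) := by
  intro h
  obtain ⟨φ, b, hφ⟩ := h (swapIso X A B)
  have h1 := hφ (Sum.inr 0, true)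
  have h2 := hφ (Sum.inr 0, false)
  simp [swapIso, swapFun, Function.Involutive.toPerm, Prod.ext_iff] at h1 h2
  obtain ⟨hb1, hb2⟩ := h1
  cases b with
  | false =>
      rw [show ((Equiv.swap 2 3 : Equiv.Perm (Fin 4)) 0) = 0 by decide] at hb1
      rw [← h2.1] at hb1
      exact absurd hb1 (by simp)
  | true => simp at hb2

def homInl {V : Type*} (X : SimpleGraph V) (A B : Set V) : X →g extGraph X A B :=
  ⟨Sum.inl, fun {_ _} h => h⟩

lemma ext_conn {V : Type*} (X : SimpleGraph V) (A B : Set V) (hc : X.Connected)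
    (hAB : A.Nonempty ∨ B.Nonempty) : (extGraph X A B).Connected := by
  rw [connected_iff_exists_forall_reachable]
  rcases hAB with ⟨a, ha⟩ | ⟨b, hb⟩
  · refine ⟨Sum.inl a, ?_⟩
    have h0 : (extGraph X A B).Adj (Sum.inl a) (Sum.inr 0) := Or.inl ⟨Or.inl rfl, ha⟩
    have h1 : (extGraph X A B).Adj (Sum.inl a) (Sum.inr 1) := Or.inl ⟨Or.inr rfl, ha⟩
    have h02 : (extGraph X A B).Adj (Sum.inr 0) (Sum.inr 2) := Or.inl ⟨rfl, rfl⟩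
    have h13 : (extGraph X A B).Adj (Sum.inr 1) (Sum.inr 3) := Or.inr (Or.inr (Or.inl ⟨rfl, rfl⟩))
    rintro (u | i)
    · exact Reachable.map (homInl X A B) (hc.preconnected a u)
    · fin_cases i
      · exact h0.reachable
      · exact h1.reachable
      · exact h0.reachable.trans h02.reachable
      · exact h1.reachable.trans h13.reachable
  · refine ⟨Sum.inl b, ?_⟩
    have h2 : (extGraph X A B).Adj (Sum.inl b) (Sum.inr 2) := Or.inr ⟨Or.inl rfl, hb⟩
    have h3 : (extGraph X A B).Adj (Sum.inl b) (Sum.inr 3) := Or.inr ⟨Or.inr rfl, hb⟩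
    have h20 : (extGraph X A B).Adj (Sum.inr 2) (Sum.inr 0) := Or.inr (Or.inl ⟨rfl, rfl⟩)
    have h31 : (extGraph X A B).Adj (Sum.inr 3) (Sum.inr 1) := Or.inr (Or.inr (Or.inr ⟨rfl, rfl⟩))
    rintro (u | i)
    · exact Reachable.map (homInl X A B) (hc.preconnected b u)
    · fin_cases i
      · exact h2.reachable.trans h20.reachable
      · exact h3.reachable.trans h31.reachable
      · exact h2.reachable
      · exact h3.reachable

lemma ext_ncol {V : Type*} (X : SimpleGraph V) (A B : Set V) (h : ¬X.Colorable 2) :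
    ¬(extGraph X A B).Colorable 2 := by
  rintro ⟨C⟩
  exact h ⟨C.comp (homInl X A B)⟩

lemma ext_twinfree {V : Type*} (X : SimpleGraph V) (A B : Set V) (htf : TwinFree X) :
    TwinFree (extGraph X A B) := by
  rintro (u | i) (v | j) h <;> rw [Set.ext_iff] at h
  · have : X.neighborSet u = X.neighborSet v := by
      ext w
      have := h (Sum.inl w)
      simpa [extGraph] using this
    rw [htf u v this]
  · exfalso
    have h0 := h (Sum.inr 0); have h1 := h (Sum.inr 1)
    have h2 := h (Sum.inr 2); have h3 := h (Sum.inr 3)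
    fin_cases j <;> simp [extGraph] at h0 h1 h2 h3 <;> tauto
  · exfalso
    have h0 := h (Sum.inr 0); have h1 := h (Sum.inr 1)
    have h2 := h (Sum.inr 2); have h3 := h (Sum.inr 3)
    fin_cases i <;> simp [extGraph] at h0 h1 h2 h3 <;> tauto
  · fin_cases i <;> fin_cases j <;>
      first
      | rfl
      | (exfalso
         have h0 := h (Sum.inr 0); have h1 := h (Sum.inr 1)
         have h2 := h (Sum.inr 2); have h3 := h (Sum.inr 3)
         simp [extGraph] at h0 h1 h2 h3)

theorem extGraph_unstable {V : Type*} [Fintype V] (X : SimpleGraph V) (A B : Set V) :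
    ¬IsStable (extGraph X A B) ∧
    (X.Connected → ¬X.Colorable 2 → TwinFree X → (A.Nonempty ∨ B.Nonempty) →
      (extGraph X A B).Connected ∧ ¬(extGraph X A B).Colorable 2 ∧
        TwinFree (extGraph X A B) ∧ ¬IsStable (extGraph X A B)) := by
  refine ⟨ext_not_stable X A B, fun hc hnb htf hAB => ?_⟩
  exact ⟨ext_conn X A B hc hAB, ext_ncol X A B hnb, ext_twinfree X A B htf,
    ext_not_stable X A B⟩
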